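/- arXiv:0906.2487 — 2 statements merged into one kernel-verified Lean document; each statement's English description precedes it below -/
import Mathlib

section
/- Let β > 1/3. The function f(x) = βx² − x·cosh(x)/sinh(x) is nondecreasing on (0, ∞). -/
open Real

lemma lemA (x : ℝ) (hx : 0 ≤ x) : Real.sinh x ≤ x * Real.cosh x := by
  have key : MonotoneOn (fun x : ℝ => x * Real.cosh x - Real.sinh x) (Set.Ici 0) := by
    have hder : ∀ y : ℝ, HasDerivAt (fun x : ℝ => x * Real.cosh x - Real.sinh x)
        (1 * Real.sinh y * y + Real.cosh y * 1 - Real.cosh y) y := by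
      intro y
      have h1 : HasDerivAt (fun x : ℝ => x * Real.cosh x)
          (1 * Real.cosh y + y * Real.sinh y) y :=
        (hasDerivAt_id' (𝕜 := ℝ) (x := y)).mul (Real.hasDerivAt_cosh y)
      have := h1.sub (Real.hasDerivAt_sinh y)
      refine this.congr_deriv ?_; ring
    apply monotoneOn_of_deriv_nonneg (convex_Ici 0)
    · exact (Continuous.sub (continuous_id.mul Real.continuous_cosh) Real.continuous_sinh).continuousOn
    · intro y _; exact (hder y).differentiableAt.differentiableWithinAt
    · intro y hy
      rw [interior_Ici] at hy
      rw [Set.mem_Ioi] at hy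
      rw [(hder y).deriv]
      have h2 : 0 ≤ Real.sinh y := Real.sinh_nonneg_iff.mpr hy.le
      nlinarith
  have h0 : (0:ℝ) ∈ Set.Ici (0:ℝ) := Set.self_mem_Ici
  have := key h0 (Set.mem_Ici.mpr hx) hx
  simp at this
  linarith

lemma lemB (x : ℝ) (hx : 0 ≤ x) :
    3 * (Real.sinh x * Real.cosh x) ≤ 2 * x * Real.sinh x ^ 2 + 3 * x := by
  have key : MonotoneOn (fun x : ℝ => 2 * x * Real.sinh x ^ 2 + 3 * x
      - 3 * (Real.sinh x * Real.cosh x)) (Set.Ici 0) := by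
    have hder : ∀ y : ℝ, HasDerivAt (fun x : ℝ => 2 * x * Real.sinh x ^ 2 + 3 * x
        - 3 * (Real.sinh x * Real.cosh x))
        (2 * Real.sinh y ^ 2 + 2 * y * (2 * Real.sinh y * Real.cosh y) + 3
          - 3 * (Real.cosh y * Real.cosh y + Real.sinh y * Real.sinh y)) y := by
      intro y
      have hs := Real.hasDerivAt_sinh y
      have hc := Real.hasDerivAt_cosh y
      have h1 : HasDerivAt (fun x : ℝ => 2 * x * Real.sinh x ^ 2)
          (2 * Real.sinh y ^ 2 + 2 * y * (2 * Real.sinh y * Real.cosh y)) y := by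
        have := ((hasDerivAt_id' (𝕜 := ℝ) (x := y)).const_mul (2:ℝ)).mul (hs.pow 2)
        refine this.congr_deriv ?_; simp only [Pi.pow_apply]; ring
      have h2 : HasDerivAt (fun x : ℝ => 3 * (Real.sinh x * Real.cosh x))
          (3 * (Real.cosh y * Real.cosh y + Real.sinh y * Real.sinh y)) y := by
        have := (hs.mul hc).const_mul (3:ℝ)
        refine this.congr_deriv ?_
        try ring
      have := (h1.add ((hasDerivAt_id' (𝕜 := ℝ) (x := y)).const_mul (3:ℝ))).sub h2
      refine this.congr_deriv ?_
      try ring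
    apply monotoneOn_of_deriv_nonneg (convex_Ici 0)
    · apply Continuous.continuousOn; continuity
    · intro y _; exact (hder y).differentiableAt.differentiableWithinAt
    · intro y hy
      rw [interior_Ici] at hy
      rw [(hder y).deriv]
      have h2 : 0 ≤ Real.sinh y := Real.sinh_nonneg_iff.mpr hy.le
      have h3 : Real.sinh y ≤ y * Real.cosh y := lemA y hy.le
      have h4 : Real.cosh y ^ 2 = 1 + Real.sinh y ^ 2 := by
        have := Real.cosh_sq_sub_sinh_sq y; nlinarith
      nlinarith
  have h0 : (0:ℝ) ∈ Set.Ici (0:ℝ) := Set.self_mem_Ici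
  have := key h0 (Set.mem_Ici.mpr hx) hx
  simp at this
  linarith

theorem stmt3 (β : ℝ) (hβ : 1/3 < β) :
    MonotoneOn (fun x : ℝ => β * x ^ 2 - x * Real.cosh x / Real.sinh x) (Set.Ioi 0) := by
  have hder : ∀ y : ℝ, 0 < y → HasDerivAt
      (fun x : ℝ => β * x ^ 2 - x * Real.cosh x / Real.sinh x)
      (β * (2 * y) - ((1 * Real.cosh y + y * Real.sinh y) * Real.sinh y
        - y * Real.cosh y * Real.cosh y) / Real.sinh y ^ 2) y := by
    intro y hy
    have hsne : Real.sinh y ≠ 0 := ne_of_gt (Real.sinh_pos_iff.mpr hy)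
    have h1 : HasDerivAt (fun x : ℝ => β * x ^ 2) (β * (2 * y)) y := by
      have := ((hasDerivAt_pow 2 y).const_mul β)
      refine this.congr_deriv ?_; ring
    have h2 : HasDerivAt (fun x : ℝ => x * Real.cosh x)
        (1 * Real.cosh y + y * Real.sinh y) y :=
      (hasDerivAt_id' (𝕜 := ℝ) (x := y)).mul (Real.hasDerivAt_cosh y)
    exact h1.sub (h2.div (Real.hasDerivAt_sinh y) hsne)
  apply monotoneOn_of_deriv_nonneg (convex_Ioi 0)
  · intro y hy
    exact ((hder y hy).differentiableAt.continuousAt).continuousWithinAt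
  · intro y hy
    rw [interior_Ioi] at hy
    exact (hder y hy).differentiableAt.differentiableWithinAt
  · intro y hy
    rw [interior_Ioi] at hy
    rw [(hder y hy).deriv]
    have hs : 0 < Real.sinh y := Real.sinh_pos_iff.mpr hy
    have hB := lemB y hy.le
    rw [sub_nonneg, div_le_iff₀ (by positivity : (0:ℝ) < Real.sinh y ^ 2)]
    have h4 : Real.cosh y ^ 2 = 1 + Real.sinh y ^ 2 := by
      have := Real.cosh_sq_sub_sinh_sq y; nlinarith
    have h5 : 0 ≤ (β - 1/3) * (y * Real.sinh y ^ 2) :=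
      mul_nonneg (by linarith) (mul_nonneg hy.le (sq_nonneg _))
    have h6 : y * (Real.cosh y * Real.cosh y) = y + y * Real.sinh y ^ 2 := by
      rw [show Real.cosh y * Real.cosh y = Real.cosh y ^ 2 by ring, h4]; ring
    nlinarith [h5, hB, h6]
end

section
/- Let β > 1/3, α ≥ 1, γ ≥ 0, and let ξ, k be real numbers with ξ ≠ 0. Set s = √(ξ² + k²). Then β ξ² + β k² + α + γ − ξ² / (γ + tanh(s)·s) ≥ β k² + α + γ − 1. -/
open Real

lemma aux_sinh_nonneg (t : ℝ) (ht : 0 ≤ t) : 0 ≤ Real.sinh t := by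
  rcases lt_or_eq_of_le ht with h | h
  · exact le_of_lt (by simpa using Real.sinh_lt_sinh.mpr h)
  · simp [← h]

lemma aux_sinh_pos (t : ℝ) (ht : 0 < t) : 0 < Real.sinh t := by
  simpa using Real.sinh_lt_sinh.mpr ht

lemma aux_sinh_le (t : ℝ) (ht : 0 ≤ t) : Real.sinh t ≤ t * Real.cosh t := by
  have hmono : MonotoneOn (fun y => y * Real.cosh y - Real.sinh y) (Set.Ici 0) := by
    apply monotoneOn_of_deriv_nonneg (convex_Ici 0)
    · exact (((continuous_id.mul Real.continuous_cosh).sub Real.continuous_sinh)).continuousOn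
    · intro x hx
      exact ((hasDerivAt_id' x).mul (Real.hasDerivAt_cosh x)).sub
        (Real.hasDerivAt_sinh x) |>.differentiableAt.differentiableWithinAt
    · intro x hx
      have hx0 : (0:ℝ) ≤ x := interior_subset hx
      have h1 : HasDerivAt (fun y : ℝ => y * Real.cosh y - Real.sinh y)
          (1 * Real.cosh x + x * Real.sinh x - Real.cosh x) x :=
        ((hasDerivAt_id' x).mul (Real.hasDerivAt_cosh x)).sub (Real.hasDerivAt_sinh x)
      rw [h1.deriv]
      have := mul_nonneg hx0 (aux_sinh_nonneg x hx0)
      nlinarith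
  have := hmono (Set.self_mem_Ici) (Set.mem_Ici.mpr ht) ht
  simp only [Real.sinh_zero, Real.cosh_zero, mul_one, zero_mul, sub_zero, zero_sub, neg_zero] at this
  linarith

lemma aux_key (t : ℝ) (ht : 0 ≤ t) : t * Real.cosh t ≤ (1 + t ^ 2 / 3) * Real.sinh t := by
  have hmono : MonotoneOn (fun y => (3 + y ^ 2) * Real.sinh y - 3 * (y * Real.cosh y)) (Set.Ici 0) := by
    apply monotoneOn_of_deriv_nonneg (convex_Ici 0)
    · exact (((continuous_const.add (continuous_pow 2)).mul Real.continuous_sinh).sub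
        (continuous_const.mul (continuous_id.mul Real.continuous_cosh))).continuousOn
    · intro x hx
      exact ((((hasDerivAt_const x (3:ℝ)).add (hasDerivAt_pow 2 x)).mul
        (Real.hasDerivAt_sinh x)).sub ((hasDerivAt_const x (3:ℝ)).mul
        ((hasDerivAt_id' x).mul (Real.hasDerivAt_cosh x)))).differentiableAt.differentiableWithinAt
    · intro x hx
      have hx0 : (0:ℝ) ≤ x := interior_subset hx
      have h1 : HasDerivAt (fun y : ℝ => (3 + y ^ 2) * Real.sinh y - 3 * (y * Real.cosh y))
          ((0 + 2 * x ^ 1) * Real.sinh x + (3 + x ^ 2) * Real.cosh x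
            - (0 * (x * Real.cosh x) + 3 * (1 * Real.cosh x + x * Real.sinh x))) x :=
        (((hasDerivAt_const x (3:ℝ)).add (hasDerivAt_pow 2 x)).mul
          (Real.hasDerivAt_sinh x)).sub ((hasDerivAt_const x (3:ℝ)).mul
          ((hasDerivAt_id' x).mul (Real.hasDerivAt_cosh x)))
      rw [h1.deriv]
      have h2 : Real.sinh x ≤ x * Real.cosh x := aux_sinh_le x hx0
      have := mul_nonneg hx0 (sub_nonneg.mpr h2)
      nlinarith
  have := hmono (Set.self_mem_Ici) (Set.mem_Ici.mpr ht) ht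
  simp only [Real.sinh_zero, Real.cosh_zero] at this
  nlinarith

lemma aux_tanh_mono {a b : ℝ} (ha : 0 ≤ a) (hab : a ≤ b) : Real.tanh a ≤ Real.tanh b := by
  rw [Real.tanh_eq_sinh_div_cosh, Real.tanh_eq_sinh_div_cosh,
    div_le_div_iff₀ (Real.cosh_pos a) (Real.cosh_pos b)]
  have : Real.sinh (a - b) ≤ 0 := by
    rcases lt_or_eq_of_le hab with h | h
    · exact le_of_lt (by simpa using Real.sinh_lt_sinh.mpr (show a - b < 0 by linarith))
    · simp [h]
  rw [Real.sinh_sub] at this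
  linarith

theorem stmt9 (β α γ ξ k : ℝ) (hβ : 1/3 < β) (hα : 1 ≤ α) (hγ : 0 ≤ γ) (hξ : ξ ≠ 0) :
    β * ξ ^ 2 + β * k ^ 2 + α + γ
      - ξ ^ 2 / (γ + Real.tanh (Real.sqrt (ξ ^ 2 + k ^ 2)) * Real.sqrt (ξ ^ 2 + k ^ 2))
      ≥ β * k ^ 2 + α + γ - 1 := by
  set s := Real.sqrt (ξ ^ 2 + k ^ 2) with hs
  set t := |ξ| with htdef
  have ht0 : 0 < t := abs_pos.mpr hξ
  have ht2 : t ^ 2 = ξ ^ 2 := sq_abs ξ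
  have hts : t ≤ s := by
    rw [htdef, ← Real.sqrt_sq_eq_abs]
    exact Real.sqrt_le_sqrt (by nlinarith)
  have hs0 : 0 < s := lt_of_lt_of_le ht0 hts
  have htanht : 0 < Real.tanh t := by
    rw [Real.tanh_eq_sinh_div_cosh]
    exact div_pos (aux_sinh_pos t ht0) (Real.cosh_pos t)
  have hmono : Real.tanh t * t ≤ Real.tanh s * s :=
    mul_le_mul (aux_tanh_mono ht0.le hts) hts ht0.le
      (le_trans htanht.le (aux_tanh_mono ht0.le hts))
  have hden : 0 < γ + Real.tanh s * s := by
    have : 0 < Real.tanh t * t := mul_pos htanht ht0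
    linarith
  have hkey : t ≤ (1 + β * t ^ 2) * Real.tanh t := by
    have h1 : t * Real.cosh t ≤ (1 + t ^ 2 / 3) * Real.sinh t := aux_key t ht0.le
    have hsinh : 0 < Real.sinh t := aux_sinh_pos t ht0
    have h2 : (1 + t ^ 2 / 3) * Real.sinh t ≤ (1 + β * t ^ 2) * Real.sinh t := by
      nlinarith [mul_nonneg (mul_nonneg (show (0:ℝ) ≤ β - 1/3 by linarith) (sq_nonneg t)) hsinh.le]
    rw [Real.tanh_eq_sinh_div_cosh,
      show (1 + β * t ^ 2) * (Real.sinh t / Real.cosh t)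
        = ((1 + β * t ^ 2) * Real.sinh t) / Real.cosh t by ring,
      le_div_iff₀ (Real.cosh_pos t)]
    linarith
  have hdiv : ξ ^ 2 / (γ + Real.tanh s * s) ≤ 1 + β * ξ ^ 2 := by
    rw [div_le_iff₀ hden]
    have h3 : t * t ≤ (1 + β * t ^ 2) * (Real.tanh t * t) := by
      have := mul_le_mul_of_nonneg_right hkey ht0.le
      nlinarith
    have h4 : (1 + β * t ^ 2) * (Real.tanh t * t) ≤ (1 + β * t ^ 2) * (γ + Real.tanh s * s) := by
      apply mul_le_mul_of_nonneg_left (by linarith) (by nlinarith)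
    have e1 : β * t ^ 2 = β * ξ ^ 2 := by rw [ht2]
    have e2 : t * t = ξ ^ 2 := by rw [← ht2]; ring
    have h5 : (1 + β * t ^ 2) * (γ + Real.tanh s * s)
        = (1 + β * ξ ^ 2) * (γ + Real.tanh s * s) := by rw [e1]
    linarith [h3, h4, h5.le, h5.ge]
  linarith
end
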